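/- Let a, b be real with b² - a² > 0, and set c = √(b² - a²). For the map X(u,θ) = (u, (a/c)u + sinh(θ)/√c, (b/c)u + cosh(θ)/√c) into Lorentz-Minkowski 3-space, the determinant of the induced metric with respect to (u,θ) equals -(1/c³)(b sinh θ - a cosh θ)². Setting θ₀ = (1/2)log((a+b)/(b-a)), the equation b sinh θ - a cosh θ = 0 has θ = θ₀ as its unique solution; hence the surface is timelike for θ ≠ θ₀ and the curve u ↦ X(u, θ₀) is a lightlike straight line. -/

import Mathlib

/-- Lorentzian inner product on `ℝ × ℝ × ℝ` for the metric `dx² + dy² - dt²`. -/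
def Lprod (p q : ℝ × ℝ × ℝ) : ℝ := p.1 * q.1 + p.2.1 * q.2.1 - p.2.2 * q.2.2

/-- For `b² - a² > 0`, `c = √(b²-a²)`, and the Type II singular-type surface
`X(u,θ) = (u, (a/c)u + sinh θ/√c, (b/c)u + cosh θ/√c)`, the determinant of the induced metric
equals `-(1/c³)(b sinh θ - a cosh θ)²`; with `θ₀ = (1/2)log((a+b)/(b-a))`, the equation
`b sinh θ - a cosh θ = 0` has `θ₀` as its unique solution; the surface is timelike for
`θ ≠ θ₀`, and `u ↦ X(u, θ₀)` is a lightlike straight line. -/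
theorem stmt8 (a b c θ₀ : ℝ) (hab : 0 < b ^ 2 - a ^ 2) (hc : c = Real.sqrt (b ^ 2 - a ^ 2))
    (hθ₀ : θ₀ = (1 / 2) * Real.log ((a + b) / (b - a)))
    (X : ℝ → ℝ → ℝ × ℝ × ℝ)
    (hX : ∀ u θ, X u θ = (u, (a / c) * u + Real.sinh θ / Real.sqrt c,
        (b / c) * u + Real.cosh θ / Real.sqrt c)) :
    (∀ u θ : ℝ,
      let Xu := deriv (fun u' => X u' θ) u
      let Xθ := deriv (fun θ' => X u θ') θ
      Lprod Xu Xu * Lprod Xθ Xθ - (Lprod Xu Xθ) ^ 2 =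
        -(1 / c ^ 3) * (b * Real.sinh θ - a * Real.cosh θ) ^ 2 ∧
      (θ ≠ θ₀ → Lprod Xu Xu * Lprod Xθ Xθ - (Lprod Xu Xθ) ^ 2 < 0)) ∧
    (∀ θ : ℝ, b * Real.sinh θ - a * Real.cosh θ = 0 ↔ θ = θ₀) ∧
    (∀ u : ℝ, X u θ₀ = u • ((1, a / c, b / c) : ℝ × ℝ × ℝ) +
      ((0, Real.sinh θ₀ / Real.sqrt c, Real.cosh θ₀ / Real.sqrt c) : ℝ × ℝ × ℝ)) ∧
    Lprod (1, a / c, b / c) (1, a / c, b / c) = 0 ∧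
    ((1, a / c, b / c) : ℝ × ℝ × ℝ) ≠ 0 := by
  have hc0 : 0 < c := hc ▸ Real.sqrt_pos.mpr hab
  have hc2 : c ^ 2 = b ^ 2 - a ^ 2 := by rw [hc]; exact Real.sq_sqrt hab.le
  have hsc0 : 0 < Real.sqrt c := Real.sqrt_pos.mpr hc0
  have hscm : Real.sqrt c * Real.sqrt c = c := Real.mul_self_sqrt hc0.le
  have hba : 0 < (b - a) * (b + a) := by nlinarith
  have hbane : b - a ≠ 0 := by
    intro h; rw [h, zero_mul] at hba; exact lt_irrefl 0 hba
  have hratio : 0 < (a + b) / (b - a) := by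
    rcases lt_trichotomy (b - a) 0 with h | h | h
    · have h2 : b + a < 0 := by nlinarith
      have := div_pos (by linarith : 0 < -(a + b)) (by linarith : 0 < -(b - a))
      rwa [neg_div_neg_eq] at this
    · exact absurd h hbane
    · exact div_pos (by nlinarith) h
  have hiff : ∀ θ : ℝ, b * Real.sinh θ - a * Real.cosh θ = 0 ↔ θ = θ₀ := by
    intro θ
    have ht : 0 < Real.exp θ := Real.exp_pos θ
    have htne : Real.exp θ ≠ 0 := ht.ne'
    have hinv : Real.exp (-θ) = (Real.exp θ)⁻¹ := Real.exp_neg θ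
    have he2 : Real.exp (2 * θ) = Real.exp θ * Real.exp θ := by
      rw [two_mul, Real.exp_add]
    have hexp : b * Real.sinh θ - a * Real.cosh θ = 0 ↔
        Real.exp (2 * θ) = (a + b) / (b - a) := by
      rw [Real.sinh_eq, Real.cosh_eq, hinv, he2, eq_div_iff hbane]
      constructor
      · intro h
        field_simp at h
        nlinarith [h]
      · intro h
        field_simp
        nlinarith [h]
    rw [hexp]
    constructor
    · intro h
      have h2 := congrArg Real.log h
      rw [Real.log_exp] at h2
      rw [hθ₀]; linarith
    · intro h
      rw [h, hθ₀,
        show 2 * ((1 : ℝ) / 2 * Real.log ((a + b) / (b - a))) = Real.log ((a + b) / (b - a)) by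
          ring]
      exact Real.exp_log hratio
  have hXu : ∀ u θ : ℝ, deriv (fun u' => X u' θ) u = (1, a / c, b / c) := by
    intro u θ
    simp only [hX]
    have h1 : HasDerivAt (fun u' : ℝ => u') 1 u := hasDerivAt_id u
    have h2 : HasDerivAt (fun u' : ℝ => (a / c) * u' + Real.sinh θ / Real.sqrt c) (a / c) u := by
      simpa using ((hasDerivAt_id u).const_mul (a / c)).add_const (Real.sinh θ / Real.sqrt c)
    have h3 : HasDerivAt (fun u' : ℝ => (b / c) * u' + Real.cosh θ / Real.sqrt c) (b / c) u := by
      simpa using ((hasDerivAt_id u).const_mul (b / c)).add_const (Real.cosh θ / Real.sqrt c)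
    exact (h1.prodMk (h2.prodMk h3)).deriv
  have hXθ : ∀ u θ : ℝ, deriv (fun θ' => X u θ') θ =
      (0, Real.cosh θ / Real.sqrt c, Real.sinh θ / Real.sqrt c) := by
    intro u θ
    simp only [hX]
    have h1 : HasDerivAt (fun _ : ℝ => u) 0 θ := hasDerivAt_const θ u
    have h2 : HasDerivAt (fun θ' : ℝ => (a / c) * u + Real.sinh θ' / Real.sqrt c)
        (Real.cosh θ / Real.sqrt c) θ := by
      simpa using ((Real.hasDerivAt_sinh θ).div_const (Real.sqrt c)).const_add ((a / c) * u)
    have h3 : HasDerivAt (fun θ' : ℝ => (b / c) * u + Real.cosh θ' / Real.sqrt c)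
        (Real.sinh θ / Real.sqrt c) θ := by
      simpa using ((Real.hasDerivAt_cosh θ).div_const (Real.sqrt c)).const_add ((b / c) * u)
    exact (h1.prodMk (h2.prodMk h3)).deriv
  have hnull : Lprod (1, a / c, b / c) (1, a / c, b / c) = 0 := by
    simp only [Lprod]
    field_simp
    linarith [hc2]
  refine ⟨?_, hiff, ?_, hnull, ?_⟩
  · intro u θ Xu Xθ
    have hXu' : Xu = (1, a / c, b / c) := hXu u θ
    have hXθ' : Xθ = (0, Real.cosh θ / Real.sqrt c, Real.sinh θ / Real.sqrt c) := hXθ u θ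
    have hcs : Real.cosh θ ^ 2 - Real.sinh θ ^ 2 = 1 := Real.cosh_sq_sub_sinh_sq θ
    have hdet : Lprod Xu Xu * Lprod Xθ Xθ - (Lprod Xu Xθ) ^ 2 =
        -(1 / c ^ 3) * (b * Real.sinh θ - a * Real.cosh θ) ^ 2 := by
      have e1 : Lprod Xu Xu = 0 := by rw [hXu']; exact hnull
      have e2 : Lprod Xθ Xθ = 1 / c := by
        rw [hXθ']; simp only [Lprod]
        rw [div_mul_div_comm, div_mul_div_comm, hscm, zero_mul, zero_add, div_sub_div_same]
        rw [show Real.cosh θ * Real.cosh θ - Real.sinh θ * Real.sinh θ = 1 by nlinarith [hcs]]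
      have e3 : Lprod Xu Xθ = (a * Real.cosh θ - b * Real.sinh θ) / (c * Real.sqrt c) := by
        rw [hXu', hXθ']; simp only [Lprod]
        field_simp
        ring
      rw [e1, e2, e3, zero_mul, zero_sub, div_pow, mul_pow,
        show (Real.sqrt c ^ 2 : ℝ) = c from Real.sq_sqrt hc0.le]
      field_simp
      ring
    refine ⟨hdet, fun hθ => ?_⟩
    rw [hdet]
    have hK : b * Real.sinh θ - a * Real.cosh θ ≠ 0 := fun h => hθ ((hiff θ).mp h)
    have hKsq : 0 < (b * Real.sinh θ - a * Real.cosh θ) ^ 2 :=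
      lt_of_le_of_ne (sq_nonneg _) (Ne.symm (pow_ne_zero 2 hK))
    have h3 : 0 < c ^ 3 := pow_pos hc0 3
    have := mul_pos (one_div_pos.mpr h3) hKsq
    linarith
  · intro u
    rw [hX]
    simp only [Prod.smul_def, smul_eq_mul, Prod.mk_add_mk, Prod.mk.injEq]
    refine ⟨by ring, by ring, by ring⟩
  · intro h
    have h1 := congrArg Prod.fst h
    simp at h1
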